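/- Let A be a signed adjacency matrix of order n, let c ≥ 0 be a real number, and let k ≥ 1 be an integer such that at least k of the n eigenvalues of A, counted with multiplicity, are ≥ c (i.e., the sum over eigenvalues λ ≥ c of dim ker(A − λ·I) is at least k). Then for every subset S of the indices {1,…,n} with |S| = n − k + 1, there exists u ∈ S such that #{v ∈ S : A_{uv} ≠ 0} ≥ ⌈c⌉; that is, the maximum degree of the induced subgraph on S is at least ⌈c⌉. -/

import Mathlib

set_option maxHeartbeats 1000000


open Matrix

open Finset Module Submodule in
open scoped RealInnerProductSpace in
/-- Let `A` be a signed adjacency matrix of order `n`, `c ≥ 0`, and `k ≥ 1` such that at least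
`k` of the `n` eigenvalues of `A` (counted with multiplicity) are `≥ c`.  Then every
`(n − k + 1)`-vertex induced subgraph of the underlying graph of `A` has maximum degree at
least `⌈c⌉`. -/
theorem induced_subgraph_max_degree_of_eigenvalues (n k : ℕ) (hk : 1 ≤ k)
    (c : ℝ) (hc : 0 ≤ c)
    (A : Matrix (Fin n) (Fin n) ℝ)
    (hAdiag : ∀ i, A i i = 0)
    (hAent : ∀ i j, A i j = -1 ∨ A i j = 0 ∨ A i j = 1)
    (hA : A.IsHermitian)
    (hcount : k ≤ (Finset.univ.filter (fun i => c ≤ hA.eigenvalues i)).card)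
    (S : Finset (Fin n)) (hS : S.card = n - k + 1) :
    ∃ u ∈ S, ⌈c⌉₊ ≤ (S.filter (fun v => A u v ≠ 0)).card := by
  classical
  -- choose a vertex of maximum degree in `S`
  have hSne : S.Nonempty := Finset.card_pos.mp (by omega)
  obtain ⟨u₀, hu₀, hmax⟩ := Finset.exists_max_image S
    (fun u => (S.filter (fun v => A u v ≠ 0)).card) hSne
  refine ⟨u₀, hu₀, ?_⟩
  rw [Nat.ceil_le]
  set D : ℝ := ((S.filter (fun v => A u₀ v ≠ 0)).card : ℝ) with hD
  -- find a nonzero vector in the intersection of the eigenspace span and the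
  -- coordinate subspace of `S`
  set b := hA.eigenvectorBasis with hb
  set e := EuclideanSpace.basisFun (Fin n) ℝ with he
  set T := Finset.univ.filter (fun i => c ≤ hA.eigenvalues i) with hT
  set W : Submodule ℝ (EuclideanSpace ℝ (Fin n)) := span ℝ (⇑b.toBasis '' ↑T) with hW
  set U : Submodule ℝ (EuclideanSpace ℝ (Fin n)) := span ℝ (⇑e.toBasis '' ↑S) with hU
  have hknd : k ≤ n := le_trans hcount (le_trans (Finset.card_filter_le _ _) (by simp))
  have hliW : LinearIndependent ℝ (fun i : (↑T : Set (Fin n)) => b.toBasis i) :=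
    b.toBasis.linearIndependent.comp _ Subtype.val_injective
  have hliU : LinearIndependent ℝ (fun i : (↑S : Set (Fin n)) => e.toBasis i) :=
    e.toBasis.linearIndependent.comp _ Subtype.val_injective
  have hdimW : finrank ℝ W = T.card := by
    rw [hW, Set.image_eq_range]
    exact (finrank_span_eq_card hliW).trans (by simp)
  have hdimU : finrank ℝ U = S.card := by
    rw [hU, Set.image_eq_range]
    exact (finrank_span_eq_card hliU).trans (by simp)
  have hsum : n + 1 ≤ finrank ℝ W + finrank ℝ U := by
    rw [hdimW, hdimU, hS]; omega
  have hinf : 0 < finrank ℝ (W ⊓ U : Submodule ℝ (EuclideanSpace ℝ (Fin n))) := by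
    have h1 := Submodule.finrank_sup_add_finrank_inf_eq W U
    have h2 : finrank ℝ (W ⊔ U : Submodule ℝ (EuclideanSpace ℝ (Fin n))) ≤ n := by
      simpa using (Submodule.finrank_le (W ⊔ U))
    omega
  haveI := Module.finrank_pos_iff.mp hinf
  obtain ⟨⟨x, hxmem⟩, hxne'⟩ := exists_ne (0 : (W ⊓ U : Submodule ℝ (EuclideanSpace ℝ (Fin n))))
  have hxne : x ≠ 0 := by simpa [Submodule.mk_eq_zero] using hxne'
  have hxT : ∀ i, ¬ c ≤ hA.eigenvalues i → b.repr x i = 0 := by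
    intro i hi
    have hxW : x ∈ W := hxmem.1
    rw [hW] at hxW
    have hsupp := (Basis.mem_span_image (b := b.toBasis)).mp hxW
    have h0 : i ∉ (b.toBasis.repr x).support := fun hc => hi (by simpa [hT] using hsupp hc)
    have := Finsupp.notMem_support_iff.mp h0
    rwa [b.coe_toBasis_repr_apply] at this
  have hxS : ∀ i, i ∉ S → x i = 0 := by
    intro i hi
    have hxU : x ∈ U := hxmem.2
    rw [hU] at hxU
    have hsupp := (Basis.mem_span_image (b := e.toBasis)).mp hxU
    have h0 : i ∉ (e.toBasis.repr x).support := fun hc => hi (by simpa using hsupp hc)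
    have := Finsupp.notMem_support_iff.mp h0
    rw [e.coe_toBasis_repr_apply] at this
    simpa [he, EuclideanSpace.basisFun_repr] using this
  -- the quadratic form is at least `c * ‖x‖²`
  set L := Matrix.toEuclideanLin A with hL
  have hsym : L.IsSymmetric := (Matrix.isHermitian_iff_isSymmetric.mp hA)
  have hLb : ∀ i, L (b i) = hA.eigenvalues i • b i := by
    intro i
    have h := hA.mulVec_eigenvectorBasis i
    ext j
    simpa [hL, Matrix.toEuclideanLin_apply] using congrFun h j
  have lower : c * ⟪x, x⟫ ≤ ⟪x, L x⟫ := by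
    have key : ∀ y : EuclideanSpace ℝ (Fin n),
        ⟪x, L y⟫ = ∑ i, b.repr x i * (hA.eigenvalues i * b.repr y i) := by
      intro y
      conv_lhs => rw [← b.sum_repr x]
      rw [sum_inner]
      refine Finset.sum_congr rfl fun i _ => ?_
      rw [real_inner_smul_left, ← hsym (b i) y, hLb i, real_inner_smul_left,
        ← b.repr_apply_apply]
    have keyid : ⟪x, x⟫ = ∑ i, b.repr x i * b.repr x i := by
      conv_lhs => rw [← b.sum_repr x]
      rw [sum_inner]
      refine Finset.sum_congr rfl fun i _ => ?_
      rw [real_inner_smul_left, ← b.repr_apply_apply, b.sum_repr]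
    rw [key x, keyid, Finset.mul_sum]
    refine Finset.sum_le_sum fun i _ => ?_
    by_cases hi : c ≤ hA.eigenvalues i
    · have := mul_self_nonneg (b.repr x i)
      nlinarith
    · rw [hxT i hi]; ring_nf; rfl
  -- the quadratic form is at most `D * ‖x‖²`
  have hDnn : 0 ≤ D := by positivity
  have hAle : ∀ u v, -1 ≤ A u v ∧ A u v ≤ 1 := by
    intro u v; rcases hAent u v with h|h|h <;> rw [h] <;> norm_num
  have hAsymm : ∀ u v, A u v = A v u := by
    intro u v
    have := congrFun (congrFun hA.symm u) v
    simpa [Matrix.conjTranspose_apply] using this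
  have upper : ⟪x, L x⟫ ≤ D * ⟪x, x⟫ := by
    have hlhs : ⟪x, L x⟫ = ∑ u, ∑ v, x u * (A u v * x v) := by
      rw [PiLp.inner_apply]
      refine Finset.sum_congr rfl fun u _ => ?_
      rw [show L x u = ∑ v, A u v * x v by
        simp [hL, Matrix.toEuclideanLin_apply, Matrix.mulVec, dotProduct]]
      simp [Finset.mul_sum]
      rw [Finset.sum_mul]; exact Finset.sum_congr rfl fun v _ => by ring
    have hrhs : ⟪x, x⟫ = ∑ u, x u * x u := by
      rw [PiLp.inner_apply]; simp
      exact Finset.sum_congr rfl fun i _ => sq _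
    rw [hlhs, hrhs]
    have step1 : ∑ u, ∑ v, x u * (A u v * x v) ≤
        ∑ u, ∑ v, (if u ∈ S ∧ v ∈ S ∧ A u v ≠ 0 then (x u ^ 2 + x v ^ 2) / 2 else 0) := by
      refine Finset.sum_le_sum fun u _ => Finset.sum_le_sum fun v _ => ?_
      by_cases hu : u ∈ S
      · by_cases hv : v ∈ S
        · by_cases h0 : A u v = 0
          · simp [h0]
          · rw [if_pos ⟨hu, hv, h0⟩]
            obtain ⟨h1, h2⟩ := hAle u v
            nlinarith [mul_nonneg (sub_nonneg.mpr h2) (sq_nonneg (x u + x v)),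
              mul_nonneg (by linarith : (0:ℝ) ≤ A u v + 1) (sq_nonneg (x u - x v))]
        · rw [hxS v hv]
          split_ifs <;> nlinarith [sq_nonneg (x u), sq_nonneg (x v)]
      · rw [hxS u hu]
        split_ifs <;> nlinarith [sq_nonneg (x u), sq_nonneg (x v)]
    have step2 : ∑ u, ∑ v, (if u ∈ S ∧ v ∈ S ∧ A u v ≠ 0 then (x u ^ 2 + x v ^ 2) / 2 else 0)
        = ∑ u, ∑ v, (if u ∈ S ∧ v ∈ S ∧ A u v ≠ 0 then x u ^ 2 else 0) := by
      have hsplit : ∀ u v : Fin n,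
          (if u ∈ S ∧ v ∈ S ∧ A u v ≠ 0 then (x u ^ 2 + x v ^ 2) / 2 else 0)
          = (if u ∈ S ∧ v ∈ S ∧ A u v ≠ 0 then x u ^ 2 / 2 else 0)
            + (if u ∈ S ∧ v ∈ S ∧ A u v ≠ 0 then x v ^ 2 / 2 else 0) := by
        intro u v; split_ifs <;> ring
      simp_rw [hsplit, Finset.sum_add_distrib]
      have hswap : ∑ u, ∑ v, (if u ∈ S ∧ v ∈ S ∧ A u v ≠ 0 then x v ^ 2 / 2 else 0)
          = ∑ u, ∑ v, (if u ∈ S ∧ v ∈ S ∧ A u v ≠ 0 then x u ^ 2 / 2 else 0) := by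
        rw [Finset.sum_comm]
        refine Finset.sum_congr rfl fun u _ => Finset.sum_congr rfl fun v _ => ?_
        have : (v ∈ S ∧ u ∈ S ∧ A v u ≠ 0) ↔ (u ∈ S ∧ v ∈ S ∧ A u v ≠ 0) := by
          rw [hAsymm v u]; tauto
        simp only [this]
      rw [hswap, ← Finset.sum_add_distrib]
      refine Finset.sum_congr rfl fun u _ => ?_
      rw [← Finset.sum_add_distrib]
      refine Finset.sum_congr rfl fun v _ => ?_
      split_ifs <;> ring
    have step3 : ∑ u, ∑ v, (if u ∈ S ∧ v ∈ S ∧ A u v ≠ 0 then x u ^ 2 else 0)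
        ≤ ∑ u, D * (x u * x u) := by
      refine Finset.sum_le_sum fun u _ => ?_
      by_cases hu : u ∈ S
      · have heq : ∑ v, (if u ∈ S ∧ v ∈ S ∧ A u v ≠ 0 then x u ^ 2 else 0)
            = ((S.filter (fun v => A u v ≠ 0)).card : ℝ) * x u ^ 2 := by
          rw [show (fun v => if u ∈ S ∧ v ∈ S ∧ A u v ≠ 0 then x u ^ 2 else 0)
              = (fun v => if v ∈ S.filter (fun v => A u v ≠ 0) then x u ^ 2 else 0) by
            funext v; simp [hu, Finset.mem_filter, and_comm]]
          rw [Finset.sum_ite_mem, Finset.univ_inter, Finset.sum_const, nsmul_eq_mul]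
        rw [heq]
        have hd : ((S.filter (fun v => A u v ≠ 0)).card : ℝ) ≤ D := by
          rw [hD]; exact_mod_cast hmax u hu
        nlinarith [sq_nonneg (x u)]
      · rw [hxS u hu]
        simp [hu]
    rw [← Finset.mul_sum] at step3
    linarith
  -- conclude
  have hpos : 0 < ⟪x, x⟫ := by
    rw [real_inner_self_eq_norm_sq]
    have : ‖x‖ ≠ 0 := norm_ne_zero_iff.mpr hxne
    positivity
  have hcD : c ≤ D := by
    by_contra h
    push_neg at h
    have := lower.trans upper
    nlinarith
  exact hcD
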